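/- arXiv:1809.03691 — 6 statements merged into one kernel-verified Lean document; each statement's English description precedes it below -/
import Mathlib

section
/- Let b : {p ∈ (ℤ_{≥0})^m : |p| = M} → ℂ^n be a family of vectors such that for all w ∈ ℂ^m, ‖w‖^{2M} = ‖∑_{|p|=M} b_p w^p‖^2. Then for distinct multi-indices p ≠ q with |p| = |q| = M one has ⟨b_p, b_q⟩ = 0, and ‖b_p‖^2 = M!/(p_1!⋯p_m!) for every p. -/
open Finset

lemma vanish_real {m : ℕ} {ι : Type*} (s : Finset ι) (e : ι → (Fin m → ℕ))
    (he : Set.InjOn e s) (c : ι → ℝ)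
    (h : ∀ r : Fin m → ℝ, ∑ j ∈ s, (∏ i, r i ^ e j i) * c j = 0) :
    ∀ j ∈ s, c j = 0 := by
  classical
  intro j₀ hj₀
  set P : MvPolynomial (Fin m) ℝ :=
    ∑ j ∈ s, MvPolynomial.monomial (Finsupp.equivFunOnFinite.symm (e j)) (c j) with hPdef
  have heval : ∀ x : Fin m → ℝ, MvPolynomial.eval x P = 0 := by
    intro x
    rw [hPdef, map_sum, ← h x]
    refine Finset.sum_congr rfl fun j hj => ?_
    rw [MvPolynomial.eval_monomial, Finsupp.prod_fintype _ _ (fun i => pow_zero (x i)), mul_comm]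
    rfl
  have hP : P = 0 := MvPolynomial.funext (fun x => by rw [heval x]; simp)
  have h2 := congrArg (MvPolynomial.coeff (Finsupp.equivFunOnFinite.symm (e j₀))) hP
  rw [hPdef, MvPolynomial.coeff_zero, MvPolynomial.coeff_sum] at h2
  rw [Finset.sum_eq_single j₀ ?_ (fun hn => absurd hj₀ hn)] at h2
  · rwa [MvPolynomial.coeff_monomial, if_pos rfl] at h2
  · intro j hj hne
    rw [MvPolynomial.coeff_monomial, if_neg]
    intro hcontra
    exact hne (he hj hj₀ (Finsupp.equivFunOnFinite.symm.injective hcontra))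

lemma vanish_cx {m : ℕ} {ι : Type*} (s : Finset ι) (e : ι → (Fin m → ℕ))
    (he : Set.InjOn e s) (c : ι → ℂ)
    (h : ∀ r : Fin m → ℝ, ∑ j ∈ s, ((∏ i, r i ^ e j i : ℝ) : ℂ) * c j = 0) :
    ∀ j ∈ s, c j = 0 := by
  intro j hj
  have hre := vanish_real s e he (fun j => (c j).re) (fun r => by
    have := congrArg Complex.re (h r)
    simpa [Complex.re_sum, Complex.mul_re, ← Complex.ofReal_pow, ← Complex.ofReal_prod] using this)
  have him := vanish_real s e he (fun j => (c j).im) (fun r => by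
    have := congrArg Complex.im (h r)
    simpa [Complex.im_sum, Complex.mul_im, ← Complex.ofReal_pow, ← Complex.ofReal_prod] using this)
  exact Complex.ext (hre j hj) (him j hj)

lemma key_expand {m n M : ℕ} (b : (Fin m → ℕ) → EuclideanSpace ℂ (Fin n))
    (h : ∀ w : Fin m → ℂ, (∑ i, ‖w i‖ ^ 2) ^ M =
        ‖∑ p ∈ Finset.Nat.antidiagonalTuple m M, (∏ i, w i ^ p i) • b p‖ ^ 2)
    (w : Fin m → ℂ) :
    (((∑ i, ‖w i‖ ^ 2) ^ M : ℝ) : ℂ) =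
      ∑ p ∈ Finset.Nat.antidiagonalTuple m M, ∑ q ∈ Finset.Nat.antidiagonalTuple m M,
        ((∏ i, (starRingEnd ℂ) (w i) ^ p i) * ∏ i, w i ^ q i) * inner ℂ (b p) (b q) := by
  set A := Finset.Nat.antidiagonalTuple m M
  set S := ∑ p ∈ A, (∏ i, w i ^ p i) • b p with hS
  have h1 : (((∑ i, ‖w i‖ ^ 2) ^ M : ℝ) : ℂ) = inner ℂ S S := by
    rw [h w, inner_self_eq_norm_sq_to_K, ← hS]
    norm_cast
  rw [h1, hS, sum_inner]
  refine Finset.sum_congr rfl fun p hp => ?_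
  rw [inner_sum]
  refine Finset.sum_congr rfl fun q hq => ?_
  rw [inner_smul_left, inner_smul_right, map_prod]
  simp only [map_pow]
  ring

lemma geom_aux {N : ℕ} (hN : N ≠ 0) {ζ : ℂ} (hζ : IsPrimitiveRoot ζ N) {a b : ℕ}
    (ha : a < N) (hb : b < N) :
    ∑ k ∈ Finset.range N, (ζ ^ a * (starRingEnd ℂ) ζ ^ b) ^ k
      = if a = b then (N : ℂ) else 0 := by
  have hζN : ζ ^ N = 1 := hζ.pow_eq_one
  have hζ0 : ζ ≠ 0 := by
    intro h0
    rw [h0, zero_pow hN] at hζN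
    exact zero_ne_one hζN
  have hnorm : ‖ζ‖ = 1 := Complex.norm_eq_one_of_pow_eq_one hζN hN
  have hconj : (starRingEnd ℂ) ζ = ζ⁻¹ := (RCLike.inv_eq_conj hnorm).symm
  rw [hconj]
  by_cases hab : a = b
  · subst hab
    rw [if_pos rfl]
    have h1 : ζ ^ a * ζ⁻¹ ^ a = 1 := by
      rw [inv_pow, mul_inv_cancel₀ (pow_ne_zero a hζ0)]
    rw [h1]
    simp
  · rw [if_neg hab]
    set x := ζ ^ a * ζ⁻¹ ^ b with hx
    have hx1 : x ≠ 1 := by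
      intro h1
      apply hab
      refine hζ.pow_inj ha hb ?_
      have : ζ ^ a = ζ ^ b := by
        rw [hx, inv_pow, mul_inv_eq_one₀ (pow_ne_zero b hζ0)] at h1
        exact h1
      exact this
    have hxN : x ^ N = 1 := by
      rw [hx, mul_pow, ← pow_mul, ← pow_mul, mul_comm a N, mul_comm b N, pow_mul, pow_mul, hζN,
        inv_pow, hζN]
      simp
    rw [geom_sum_eq hx1, hxN]
    simp

lemma prod_shuffle {m : ℕ} (a b c d : Fin m → ℂ) (I : ℂ)
    (h : ∀ x, a x * b x = c x * d x) :
    (∏ x, a x) * ((∏ x, b x) * I) = (∏ x, c x) * I * (∏ x, d x) := by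
  rw [← mul_assoc, ← Finset.prod_mul_distrib, Finset.prod_congr rfl (fun x _ => h x),
    Finset.prod_mul_distrib]
  ring

lemma cross_zero {m n M : ℕ} (b : (Fin m → ℕ) → EuclideanSpace ℂ (Fin n))
    (A : Finset (Fin m → ℕ)) (hbound : ∀ p' ∈ A, ∀ i, p' i ≤ M)
    (key : ∀ w : Fin m → ℂ, (((∑ i, ‖w i‖ ^ 2) ^ M : ℝ) : ℂ) =
      ∑ p' ∈ A, ∑ q' ∈ A,
        ((∏ i, (starRingEnd ℂ) (w i) ^ p' i) * ∏ i, w i ^ q' i) * inner ℂ (b p') (b q'))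
    {p q : Fin m → ℕ} (hp : p ∈ A) (hq : q ∈ A) (hne : p ≠ q) (z : Fin m → ℂ) :
    ∑ pq ∈ (A ×ˢ A).filter (fun pq => ∀ i, pq.1 i + q i = pq.2 i + p i),
      ((∏ i, (starRingEnd ℂ) (z i) ^ pq.1 i) * ∏ i, z i ^ pq.2 i)
        * (inner ℂ (b pq.1) (b pq.2) : ℂ) = 0 := by
  classical
  set N : ℕ := 2 * M + 1 with hNdef
  have hN0 : N ≠ 0 := by omega
  set ζ : ℂ := Complex.exp (2 * Real.pi * Complex.I / N) with hζdef
  have hζ : IsPrimitiveRoot ζ N := Complex.isPrimitiveRoot_exp N hN0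
  have hζN : ζ ^ N = 1 := hζ.pow_eq_one
  have hnorm : ‖ζ‖ = 1 := by
    exact Complex.norm_eq_one_of_pow_eq_one hζN hN0
  set K := Fintype.piFinset (fun _ : Fin m => Finset.range N) with hK
  set W : (Fin m → ℕ) → ℂ := fun k => ∏ i, (ζ ^ p i * (starRingEnd ℂ) ζ ^ q i) ^ k i with hW
  -- claim 1 : sum of weights is zero
  have claim1 : ∑ k ∈ K, W k = 0 := by
    rw [hK, hW, ← Finset.prod_univ_sum]
    obtain ⟨i₀, hi₀⟩ : ∃ i, p i ≠ q i := by
      by_contra hc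
      push_neg at hc
      exact hne (funext hc)
    refine Finset.prod_eq_zero (Finset.mem_univ i₀) ?_
    rw [geom_aux hN0 hζ (by have := hbound p hp i₀; omega) (by have := hbound q hq i₀; omega),
      if_neg hi₀]
  -- claim 2 : weighted phase sums
  have claim2 : ∀ p' ∈ A, ∀ q' ∈ A,
      ∑ k ∈ K, W k * (((∏ i, (starRingEnd ℂ) (z i * ζ ^ k i) ^ p' i)
          * ∏ i, (z i * ζ ^ k i) ^ q' i) * inner ℂ (b p') (b q'))
        = ((∏ i, (starRingEnd ℂ) (z i) ^ p' i) * ∏ i, z i ^ q' i) * (inner ℂ (b p') (b q') : ℂ)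
          * (if (∀ i, p' i + q i = q' i + p i) then ((N : ℂ) ^ m) else 0) := by
    intro p' hp' q' hq'
    have hterm : ∀ k : Fin m → ℕ,
        W k * (((∏ i, (starRingEnd ℂ) (z i * ζ ^ k i) ^ p' i)
          * ∏ i, (z i * ζ ^ k i) ^ q' i) * inner ℂ (b p') (b q'))
        = ((∏ i, (starRingEnd ℂ) (z i) ^ p' i) * ∏ i, z i ^ q' i) * (inner ℂ (b p') (b q') : ℂ)
          * ∏ i, (ζ ^ (p i + q' i) * (starRingEnd ℂ) ζ ^ (q i + p' i)) ^ k i := by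
      intro k
      rw [hW]
      simp only [map_mul, map_pow, mul_pow]
      rw [← Finset.prod_mul_distrib, ← Finset.prod_mul_distrib]
      exact prod_shuffle _ _ _ _ _ (fun x => by ring)
    rw [Finset.sum_congr rfl (fun k _ => hterm k), ← Finset.mul_sum]
    congr 1
    rw [hK, ← Finset.prod_univ_sum]
    have hfac : ∀ i : Fin m,
        (∑ j ∈ Finset.range N, (ζ ^ (p i + q' i) * (starRingEnd ℂ) ζ ^ (q i + p' i)) ^ j)
          = if p i + q' i = q i + p' i then (N : ℂ) else 0 := fun i =>
      geom_aux hN0 hζ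
        (by have h1 := hbound p hp i; have h2 := hbound q' hq' i; omega)
        (by have h1 := hbound q hq i; have h2 := hbound p' hp' i; omega)
    rw [Finset.prod_congr rfl (fun i _ => hfac i)]
    by_cases hcond : ∀ i, p' i + q i = q' i + p i
    · rw [if_pos hcond]
      rw [Finset.prod_congr rfl (fun i _ => by rw [if_pos (by have := hcond i; omega)])]
      simp
    · rw [if_neg hcond]
      push_neg at hcond
      obtain ⟨i₀, hi₀⟩ := hcond
      exact Finset.prod_eq_zero (Finset.mem_univ i₀) (by rw [if_neg (by omega)])
  -- combine
  have habs : ∀ k : Fin m → ℕ, ∀ i : Fin m,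
      ‖z i * ζ ^ k i‖ = ‖z i‖ := by
    intro k i
    rw [norm_mul, norm_pow, hnorm, one_pow, mul_one]
  have hmain : ∑ k ∈ K, W k * (((∑ i, ‖z i‖ ^ 2) ^ M : ℝ) : ℂ) = 0 := by
    rw [← Finset.sum_mul, claim1, zero_mul]
  have hmain2 : ∑ k ∈ K, W k * (((∑ i, ‖z i‖ ^ 2) ^ M : ℝ) : ℂ)
      = ∑ p' ∈ A, ∑ q' ∈ A,
        ((∏ i, (starRingEnd ℂ) (z i) ^ p' i) * ∏ i, z i ^ q' i) * (inner ℂ (b p') (b q') : ℂ)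
          * (if (∀ i, p' i + q i = q' i + p i) then ((N : ℂ) ^ m) else 0) := by
    have hrw : ∀ k ∈ K, W k * (((∑ i, ‖z i‖ ^ 2) ^ M : ℝ) : ℂ)
        = ∑ p' ∈ A, ∑ q' ∈ A, W k * (((∏ i, (starRingEnd ℂ) (z i * ζ ^ k i) ^ p' i)
            * ∏ i, (z i * ζ ^ k i) ^ q' i) * inner ℂ (b p') (b q')) := by
      intro k _
      rw [show ((∑ i, ‖z i‖ ^ 2) ^ M : ℝ)
          = ((∑ i, ‖z i * ζ ^ k i‖ ^ 2) ^ M : ℝ) from by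
        congr 1; exact Finset.sum_congr rfl fun i _ => by rw [habs k i]]
      rw [key (fun i => z i * ζ ^ k i), Finset.mul_sum]
      exact Finset.sum_congr rfl fun p' _ => by rw [Finset.mul_sum]
    rw [Finset.sum_congr rfl hrw, Finset.sum_comm]
    refine Finset.sum_congr rfl fun p' hp' => ?_
    rw [Finset.sum_comm]
    exact Finset.sum_congr rfl fun q' hq' => claim2 p' hp' q' hq'
  rw [hmain] at hmain2
  have hNm : ((N : ℂ) ^ m) ≠ 0 := pow_ne_zero _ (Nat.cast_ne_zero.mpr hN0)
  have hfinal : (∑ pq ∈ (A ×ˢ A).filter (fun pq => ∀ i, pq.1 i + q i = pq.2 i + p i),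
      ((∏ i, (starRingEnd ℂ) (z i) ^ pq.1 i) * ∏ i, z i ^ pq.2 i)
        * (inner ℂ (b pq.1) (b pq.2) : ℂ)) * ((N : ℂ) ^ m) = 0 := by
    rw [Finset.sum_mul, Finset.sum_filter, Finset.sum_product]
    refine (Finset.sum_congr rfl fun p' _ => Finset.sum_congr rfl fun q' _ => ?_).trans
      hmain2.symm
    split_ifs <;> simp
  exact (mul_eq_zero.mp hfinal).resolve_right hNm



/-- If a family of coefficient vectors `b_p ∈ ℂⁿ` indexed by multi-indices of
degree `M` satisfies `‖w‖^{2M} = ‖∑_{|p|=M} w^p b_p‖²` for all `w ∈ ℂᵐ`, then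
the `b_p` are pairwise orthogonal and `‖b_p‖² = M!/p!`. -/
theorem coefficient_vectors_orthogonal (m n M : ℕ)
    (b : (Fin m → ℕ) → EuclideanSpace ℂ (Fin n))
    (h : ∀ w : Fin m → ℂ,
      (∑ i, ‖w i‖ ^ 2) ^ M =
        ‖∑ p ∈ Finset.Nat.antidiagonalTuple m M, (∏ i, w i ^ p i) • b p‖ ^ 2) :
    (∀ p ∈ Finset.Nat.antidiagonalTuple m M,
      ∀ q ∈ Finset.Nat.antidiagonalTuple m M, p ≠ q →
        (inner ℂ (b p) (b q) : ℂ) = 0) ∧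
    (∀ p ∈ Finset.Nat.antidiagonalTuple m M,
      ‖b p‖ ^ 2 = (M.factorial : ℝ) / ∏ i, ((p i).factorial : ℝ)) := by
  classical
  set A := Finset.Nat.antidiagonalTuple m M with hA
  have hbound : ∀ p' ∈ A, ∀ i, p' i ≤ M := by
    intro p' hp' i
    rw [hA, Finset.Nat.mem_antidiagonalTuple] at hp'
    calc p' i ≤ ∑ j, p' j := Finset.single_le_sum (fun j _ => Nat.zero_le _) (Finset.mem_univ i)
    _ = M := hp'
  have key := key_expand b h
  -- part 1 : orthogonality
  have orth : ∀ p ∈ A, ∀ q ∈ A, p ≠ q → (inner ℂ (b p) (b q) : ℂ) = 0 := by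
    intro p hp q hq hne
    set F := (A ×ˢ A).filter (fun pq => ∀ i, pq.1 i + q i = pq.2 i + p i) with hF
    have hmem : (p, q) ∈ F := by
      rw [hF, Finset.mem_filter]
      exact ⟨Finset.mem_product.mpr ⟨hp, hq⟩, fun i => Nat.add_comm _ _⟩
    have hinj : Set.InjOn (fun pq : (Fin m → ℕ) × (Fin m → ℕ) => fun i => pq.1 i + pq.2 i) F := by
      intro x hx y hy hxy
      have hx' := Finset.mem_coe.mp hx
      have hy' := Finset.mem_coe.mp hy
      rw [Finset.mem_filter] at hx' hy'
      have h1 := hx'.2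
      have h2 := hy'.2
      have h3 : ∀ i, x.1 i + x.2 i = y.1 i + y.2 i := fun i => congrFun hxy i
      exact Prod.ext (funext fun i => by have := h1 i; have := h2 i; have := h3 i; omega)
        (funext fun i => by have := h1 i; have := h2 i; have := h3 i; omega)
    refine vanish_cx F (fun pq => fun i => pq.1 i + pq.2 i) hinj
      (fun pq => (inner ℂ (b pq.1) (b pq.2) : ℂ)) (fun r => ?_) (p, q) hmem
    have hz := cross_zero b A hbound key hp hq hne (fun i => ((r i : ℝ) : ℂ))
    rw [← hz]
    refine Finset.sum_congr rfl fun pq _ => ?_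
    congr 1
    simp only [Complex.conj_ofReal]
    push_cast
    rw [← Finset.prod_mul_distrib]
    exact Finset.prod_congr rfl fun i _ => by rw [pow_add]
  refine ⟨orth, ?_⟩
  -- part 2 : norms
  intro p hp
  have hdiag : ∀ r : Fin m → ℝ,
      ∑ p' ∈ A, ((∏ i, r i ^ (2 * p' i) : ℝ) : ℂ)
        * (((‖b p'‖ ^ 2 : ℝ) : ℂ) - (Nat.multinomial Finset.univ p' : ℂ)) = 0 := by
    intro r
    have hk := key (fun i => ((r i : ℝ) : ℂ))
    have hlhs : ((∑ i, ‖(r i : ℂ)‖ ^ 2) ^ M : ℝ) = (∑ i, r i ^ 2) ^ M := by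
      congr 1
      exact Finset.sum_congr rfl fun i _ => by rw [Complex.norm_real, Real.norm_eq_abs, sq_abs]
    have hdiagsum : ∑ p' ∈ A, ∑ q' ∈ A,
        ((∏ i, (starRingEnd ℂ) ((r i : ℂ)) ^ p' i) * ∏ i, ((r i : ℂ)) ^ q' i)
          * (inner ℂ (b p') (b q') : ℂ)
        = ∑ p' ∈ A, ((∏ i, r i ^ (2 * p' i) : ℝ) : ℂ) * ((‖b p'‖ ^ 2 : ℝ) : ℂ) := by
      refine Finset.sum_congr rfl fun p' hp' => ?_
      rw [Finset.sum_eq_single p' (fun q' hq' hne => by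
          rw [orth p' hp' q' hq' (fun hc => hne hc.symm), mul_zero])
        (fun hcon => absurd hp' hcon)]
      rw [inner_self_eq_norm_sq_to_K]
      congr 1
      · simp only [Complex.conj_ofReal]
        push_cast
        rw [← Finset.prod_mul_distrib]
        exact Finset.prod_congr rfl fun i _ => by rw [two_mul, pow_add]
      · norm_cast
    have hmulti : ((∑ i, r i ^ 2) ^ M : ℝ)
        = ∑ p' ∈ A, (Nat.multinomial Finset.univ p' : ℝ) * ∏ i, r i ^ (2 * p' i) := by
      rw [Finset.sum_pow_eq_sum_piAntidiag Finset.univ (fun i => r i ^ 2) M,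
        Finset.piAntidiag_univ_fin_eq_antidiagonalTuple M m, ← hA]
      refine Finset.sum_congr rfl fun p' _ => ?_
      congr 1
      exact Finset.prod_congr rfl fun i _ => by rw [← pow_mul]
    have hid : ∑ p' ∈ A, ((∏ i, r i ^ (2 * p' i) : ℝ) : ℂ) * ((‖b p'‖ ^ 2 : ℝ) : ℂ)
        = ∑ p' ∈ A, ((∏ i, r i ^ (2 * p' i) : ℝ) : ℂ) * (Nat.multinomial Finset.univ p' : ℂ) := by
      rw [← hdiagsum, ← hk, hlhs]
      rw [show (((∑ i, r i ^ 2) ^ M : ℝ) : ℂ)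
          = ((∑ p' ∈ A, (Nat.multinomial Finset.univ p' : ℝ) * ∏ i, r i ^ (2 * p' i) : ℝ) : ℂ)
        from by rw [← hmulti]]
      push_cast
      exact Finset.sum_congr rfl fun p' _ => by ring
    simp only [mul_sub]
    rw [Finset.sum_sub_distrib, hid, sub_self]
  have hvan := vanish_cx A (fun p' => fun i => 2 * p' i)
    (fun x hx y hy hxy => funext fun i => by have := congrFun hxy i; simp at this; omega)
    (fun p' => ((‖b p'‖ ^ 2 : ℝ) : ℂ) - (Nat.multinomial Finset.univ p' : ℂ)) hdiag p hp
  have hnorm : ‖b p‖ ^ 2 = (Nat.multinomial Finset.univ p : ℝ) := by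
    have := sub_eq_zero.mp hvan
    exact_mod_cast this
  rw [hnorm]
  have hspec : (∏ i, Nat.factorial (p i)) * Nat.multinomial Finset.univ p = Nat.factorial M := by
    rw [Nat.multinomial_spec]
    congr 1
    rw [hA, Finset.Nat.mem_antidiagonalTuple] at hp
    exact hp
  have hprodpos : (0 : ℝ) < ∏ i, ((p i).factorial : ℝ) :=
    Finset.prod_pos fun i _ => by positivity
  rw [eq_div_iff (ne_of_gt hprodpos)]
  rw [mul_comm]
  exact_mod_cast congrArg (fun x : ℕ => (x : ℝ)) hspec
end

section
/- If there exists a family of vectors b_p ∈ ℂ^n, indexed by multi-indices p ∈ (ℤ_{≥0})^m with |p| = M, such that ‖w‖^{2M} = ‖∑_{|p|=M} b_p w^p‖^2 for all w ∈ ℂ^m, then n ≥ (M+m-1)!/(M!(m-1)!). -/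
open MvPolynomial Finset

private lemma real_eval_zero_fin : ∀ {k : ℕ} (P : MvPolynomial (Fin k) ℂ),
    (∀ x : Fin k → ℝ, MvPolynomial.eval (fun i => (x i : ℂ)) P = 0) → P = 0 := by
  intro k
  induction k with
  | zero =>
      intro P h
      apply MvPolynomial.funext (q := 0)
      intro x
      have : x = fun i => (((fun _ => 0 : Fin 0 → ℝ) i : ℝ) : ℂ) := funext fun i => i.elim0
      rw [this, h]
      simp
  | succ k ih =>
      intro P h
      have key : ∀ i : ℕ, Polynomial.coeff (finSuccEquiv ℂ k P) i = 0 := by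
        intro i
        apply ih
        intro x
        have hQ0 : Polynomial.map (MvPolynomial.eval (fun j => (x j : ℂ))) (finSuccEquiv ℂ k P) = 0 := by
          apply Polynomial.eq_zero_of_infinite_isRoot
          apply Set.Infinite.mono (s := Set.range (fun t : ℝ => (t : ℂ)))
          · rintro _ ⟨t, rfl⟩
            have h2 := h (Fin.cons t x)
            have h3 : (fun i => ((Fin.cons t x : Fin (k+1) → ℝ) i : ℂ))
                = Fin.cons (t : ℂ) (fun j => (x j : ℂ)) := by
              funext i
              refine Fin.cases ?_ ?_ i <;> simp
            rw [h3, eval_eq_eval_mv_eval'] at h2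
            exact h2
          · exact Set.infinite_range_of_injective Complex.ofReal_injective
        have := congrArg (fun q => Polynomial.coeff q i) hQ0
        simpa [Polynomial.coeff_map] using this
      have hfz : finSuccEquiv ℂ k P = 0 := Polynomial.ext fun i => by simp [key i]
      exact (finSuccEquiv ℂ k).injective (by simp [hfz])

private lemma real_eval_zero {σ : Type*} [Fintype σ] (P : MvPolynomial σ ℂ)
    (h : ∀ x : σ → ℝ, MvPolynomial.eval (fun i => (x i : ℂ)) P = 0) : P = 0 := by
  classical
  let e := Fintype.equivFin σ
  have h2 : rename e P = 0 := by
    apply real_eval_zero_fin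
    intro x
    rw [eval_rename]
    exact h (x ∘ e)
  have h3 : rename e P = rename e 0 := by simpa using h2
  exact (rename_injective (R := ℂ) e e.injective) h3


open MvPolynomial Finset

private lemma coeff_extract {m : ℕ} (S : Finset (Fin m → ℕ))
    (c : (Fin m → ℕ) → (Fin m → ℕ) → ℂ)
    (h : ∀ u v : Fin m → ℂ,
      ∑ p ∈ S, ∑ q ∈ S, c p q * (∏ i, u i ^ p i) * (∏ i, v i ^ q i) = 0)
    {p q : Fin m → ℕ} (hp : p ∈ S) (hq : q ∈ S) : c p q = 0 := by
  classical
  set D : (Fin m → ℕ) → (Fin m → ℕ) → ((Fin m ⊕ Fin m) →₀ ℕ) :=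
    fun p q => Finsupp.equivFunOnFinite.symm (Sum.elim p q) with hD
  set T : MvPolynomial (Fin m ⊕ Fin m) ℂ :=
    ∑ p ∈ S, ∑ q ∈ S, monomial (D p q) (c p q) with hT
  have evalT : ∀ x : (Fin m ⊕ Fin m) → ℂ, MvPolynomial.eval x T = 0 := by
    intro x
    have expand : ∀ p' q' : Fin m → ℕ,
        MvPolynomial.eval x (monomial (D p' q') (c p' q'))
          = c p' q' * (∏ i, x (Sum.inl i) ^ p' i) * (∏ i, x (Sum.inr i) ^ q' i) := by
      intro p' q'
      rw [eval_monomial, Finsupp.prod_pow, Fintype.prod_sum_type]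
      simp only [hD, Finsupp.coe_equivFunOnFinite_symm, Sum.elim_inl, Sum.elim_inr]
      ring
    rw [hT, map_sum]
    rw [Finset.sum_congr rfl fun p' _ => map_sum (MvPolynomial.eval x) _ S]
    rw [Finset.sum_congr rfl fun p' _ => Finset.sum_congr rfl fun q' _ => expand p' q']
    exact h (fun i => x (Sum.inl i)) (fun i => x (Sum.inr i))
  have hT0 : T = 0 := MvPolynomial.funext (q := 0) (by simpa using evalT)
  have hDinj : ∀ p' q', D p' q' = D p q → p' = p ∧ q' = q := by
    intro p' q' hE
    have h1 : Sum.elim p' q' = Sum.elim p q := Finsupp.equivFunOnFinite.symm.injective hE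
    exact ⟨funext fun i => congrFun h1 (Sum.inl i), funext fun i => congrFun h1 (Sum.inr i)⟩
  have hcoeff : MvPolynomial.coeff (D p q) T = c p q := by
    rw [hT, ← Finset.sum_product']
    rw [MvPolynomial.coeff_sum]
    rw [Finset.sum_eq_single (p, q)]
    · simp [coeff_monomial]
    · rintro ⟨p', q'⟩ hmem hne
      rw [coeff_monomial, if_neg]
      intro hE
      obtain ⟨rfl, rfl⟩ := hDinj p' q' hE
      exact hne rfl
    · intro hmem
      exact absurd (Finset.mem_product.mpr ⟨hp, hq⟩) hmem
  rw [hT0] at hcoeff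
  simpa using hcoeff.symm

private lemma conj_coeff_zero {m : ℕ} (S : Finset (Fin m → ℕ))
    (c : (Fin m → ℕ) → (Fin m → ℕ) → ℂ)
    (h : ∀ w : Fin m → ℂ,
      ∑ p ∈ S, ∑ q ∈ S, c p q * (∏ i, (starRingEnd ℂ) (w i) ^ p i) * (∏ i, w i ^ q i) = 0)
    {p q : Fin m → ℕ} (hp : p ∈ S) (hq : q ∈ S) : c p q = 0 := by
  classical
  set R : MvPolynomial (Fin m ⊕ Fin m) ℂ :=
    ∑ p ∈ S, ∑ q ∈ S, C (c p q)
      * (∏ i, (X (Sum.inl i) - C Complex.I * X (Sum.inr i)) ^ p i)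
      * (∏ i, (X (Sum.inl i) + C Complex.I * X (Sum.inr i)) ^ q i) with hR
  have evalR : ∀ z : (Fin m ⊕ Fin m) → ℂ, MvPolynomial.eval z R =
      ∑ p ∈ S, ∑ q ∈ S, c p q
        * (∏ i, (z (Sum.inl i) - Complex.I * z (Sum.inr i)) ^ p i)
        * (∏ i, (z (Sum.inl i) + Complex.I * z (Sum.inr i)) ^ q i) := by
    intro z
    rw [hR, map_sum]
    refine Finset.sum_congr rfl fun p' _ => ?_
    rw [map_sum]
    refine Finset.sum_congr rfl fun q' _ => ?_
    simp [map_prod]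
  have hR0 : R = 0 := by
    apply real_eval_zero
    intro x
    rw [evalR]
    have := h (fun i => (x (Sum.inl i) : ℂ) + Complex.I * (x (Sum.inr i) : ℂ))
    rw [← this]
    refine Finset.sum_congr rfl fun p' _ => Finset.sum_congr rfl fun q' _ => ?_
    congr 2
    · refine Finset.prod_congr rfl fun i _ => ?_
      congr 1
      simp [map_add, map_mul, Complex.conj_ofReal, Complex.conj_I]
      ring
  apply coeff_extract S c ?_ hp hq
  intro u v
  have := congrArg (MvPolynomial.eval (Sum.elim (fun i => (u i + v i) / 2)
      (fun i => (v i - u i) / (2 * Complex.I)))) hR0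
  rw [evalR] at this
  have e1 : ∀ i, (u i + v i) / 2 - Complex.I * ((v i - u i) / (2 * Complex.I)) = u i := by
    intro i
    field_simp
    ring
  have e2 : ∀ i, (u i + v i) / 2 + Complex.I * ((v i - u i) / (2 * Complex.I)) = v i := by
    intro i
    field_simp
    ring
  simp only [Sum.elim_inl, Sum.elim_inr, map_zero, e1, e2] at this
  exact this

/-- If there are vectors `b_p ∈ ℂⁿ` with `‖w‖^{2M} = ‖∑_{|p|=M} w^p b_p‖²` for
all `w ∈ ℂᵐ`, then `n ≥ (M+m-1)!/(M!(m-1)!)`. -/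
theorem dimension_inequality (m n M : ℕ) (hm : 0 < m)
    (b : (Fin m → ℕ) → EuclideanSpace ℂ (Fin n))
    (h : ∀ w : Fin m → ℂ,
      (∑ i, ‖w i‖ ^ 2) ^ M =
        ‖∑ p ∈ Finset.Nat.antidiagonalTuple m M, (∏ i, w i ^ p i) • b p‖ ^ 2) :
    (M + m - 1).factorial / (M.factorial * (m - 1).factorial) ≤ n := by
  classical
  set A := Finset.Nat.antidiagonalTuple m M with hA
  have hpiA : Finset.piAntidiag (univ : Finset (Fin m)) M = A := by
    ext f
    simp [hA, Finset.mem_piAntidiag, Finset.Nat.mem_antidiagonalTuple]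
  -- expansion of the squared norm
  have expand_norm : ∀ w : Fin m → ℂ,
      ((‖∑ p ∈ A, (∏ i, w i ^ p i) • b p‖ ^ 2 : ℝ) : ℂ)
        = ∑ p ∈ A, ∑ q ∈ A, (inner ℂ (b p) (b q) : ℂ)
            * (∏ i, (starRingEnd ℂ) (w i) ^ p i) * (∏ i, w i ^ q i) := by
    intro w
    have h1 : ((‖∑ p ∈ A, (∏ i, w i ^ p i) • b p‖ : ℂ) ^ 2)
        = inner ℂ (∑ p ∈ A, (∏ i, w i ^ p i) • b p)
            (∑ q ∈ A, (∏ i, w i ^ q i) • b q) :=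
      (inner_self_eq_norm_sq_to_K (𝕜 := ℂ) (E := EuclideanSpace ℂ (Fin n)) _).symm
    push_cast
    rw [h1, sum_inner]
    refine Finset.sum_congr rfl fun p hp => ?_
    rw [inner_sum]
    refine Finset.sum_congr rfl fun q hq => ?_
    rw [inner_smul_left, inner_smul_right, map_prod]
    simp_rw [map_pow]
    ring
  -- expansion of the left-hand side
  have expand_lhs : ∀ w : Fin m → ℂ,
      (((∑ i, ‖w i‖ ^ 2) ^ M : ℝ) : ℂ)
        = ∑ p ∈ A, ∑ q ∈ A,
            (if p = q then ((Nat.multinomial univ p : ℕ) : ℂ) else 0)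
            * (∏ i, (starRingEnd ℂ) (w i) ^ p i) * (∏ i, w i ^ q i) := by
    intro w
    have habs : ∀ z : ℂ, ((‖z‖ ^ 2 : ℝ) : ℂ) = (starRingEnd ℂ) z * z := by
      intro z
      rw [mul_comm, Complex.mul_conj, Complex.normSq_eq_norm_sq]
    push_cast
    calc (∑ i, ((‖w i‖ : ℝ) : ℂ) ^ 2) ^ M
        = (∑ i, (starRingEnd ℂ) (w i) * w i) ^ M := by
          refine congrArg (· ^ M) (Finset.sum_congr rfl fun i _ => ?_)
          rw [← habs]
          push_cast
          ring
      _ = ∑ k ∈ Finset.piAntidiag univ M,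
            ((Nat.multinomial univ k : ℕ) : ℂ) * ∏ i, ((starRingEnd ℂ) (w i) * w i) ^ k i :=
          Finset.sum_pow_eq_sum_piAntidiag univ _ M
      _ = ∑ p ∈ A, ((Nat.multinomial univ p : ℕ) : ℂ)
            * (∏ i, (starRingEnd ℂ) (w i) ^ p i) * (∏ i, w i ^ p i) := by
          rw [hpiA]
          refine Finset.sum_congr rfl fun p _ => ?_
          simp [mul_pow, Finset.prod_mul_distrib, mul_assoc]
      _ = ∑ p ∈ A, ∑ q ∈ A,
            (if p = q then ((Nat.multinomial univ p : ℕ) : ℂ) else 0)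
            * (∏ i, (starRingEnd ℂ) (w i) ^ p i) * (∏ i, w i ^ q i) := by
          refine Finset.sum_congr rfl fun p hp => ?_
          rw [Finset.sum_eq_single p]
          · rw [if_pos rfl]
          · intro q hq hqp
            rw [if_neg (fun hh => hqp hh.symm), zero_mul, zero_mul]
          · intro hpA
            exact absurd hp hpA
  -- orthogonality relations
  have key : ∀ p ∈ A, ∀ q ∈ A,
      (inner ℂ (b p) (b q) : ℂ)
        = if p = q then ((Nat.multinomial univ p : ℕ) : ℂ) else 0 := by
    intro p hp q hq
    have main := conj_coeff_zero A
      (fun p q => (inner ℂ (b p) (b q) : ℂ)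
        - if p = q then ((Nat.multinomial univ p : ℕ) : ℂ) else 0)
      (fun w => by
        simp only [sub_mul, Finset.sum_sub_distrib]
        rw [← expand_norm w, ← expand_lhs w, ← h w]
        ring) hp hq
    exact sub_eq_zero.mp main
  -- linear independence
  have li : LinearIndependent ℂ (fun (p : ↥A) => b p.1) := by
    apply linearIndependent_of_ne_zero_of_inner_eq_zero (𝕜 := ℂ)
    · intro i hbz
      have hk := key _ i.2 _ i.2
      rw [if_pos rfl, hbz, inner_zero_left] at hk
      have : 0 < Nat.multinomial (univ : Finset (Fin m)) i.1 := Nat.multinomial_pos _ _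
      have h0 : ((Nat.multinomial univ i.1 : ℕ) : ℂ) ≠ 0 := by
        exact_mod_cast this.ne'
      exact h0 hk.symm
    · intro i j hij
      have hk := key _ i.2 _ j.2
      rwa [if_neg (fun hh => hij (Subtype.ext hh))] at hk
  have hle := li.fintype_card_le_finrank
  rw [finrank_euclideanSpace_fin, Fintype.card_coe] at hle
  -- cardinality computation
  have hcard : A.card = (M + m - 1).factorial / (M.factorial * (m - 1).factorial) := by
    have h1 : A.card = Fintype.card ↥A := (Fintype.card_coe _).symm
    have e : ↥A ≃ Sym (Fin m) M :=
      ((Equiv.subtypeEquivRight fun x => Finset.Nat.mem_antidiagonalTuple).trans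
        (Sym.equivNatSumOfFintype (Fin m) M).symm)
    have h2 : Fintype.card ↥A = Fintype.card (Sym (Fin m) M) := Fintype.card_congr e
    have h4 : Fintype.card (Sym (Fin m) M) = (Fintype.card (Fin m) + M - 1).choose M :=
      Sym.card_sym_eq_choose M
    rw [h1, h2, h4, Fintype.card_fin]
    have h5 : m + M - 1 = M + m - 1 := by omega
    rw [h5, Nat.choose_eq_factorial_div_factorial (by omega : M ≤ M + m - 1)]
    have h6 : M + m - 1 - M = m - 1 := by omega
    rw [h6]
  omega
end

section
/- Let G : ℂ^m → ℂ^n be a polynomial map with G(0) = 0 (every monomial of each component has total degree ≥ 1), and suppose G is not identically zero and there exist positive integers α, β such that (‖w‖^2)^α = (‖G(w)‖^2)^β for all w ∈ ℂ^m. Then β divides α. -/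
open Polynomial

private lemma natTrailingDegree_pow' {R : Type*} [CommRing R] [IsDomain R]
    {p : R[X]} (hp : p ≠ 0) (k : ℕ) :
    (p ^ k).natTrailingDegree = k * p.natTrailingDegree := by
  induction k with
  | zero => simp
  | succ k ih =>
    rw [pow_succ, natTrailingDegree_mul (pow_ne_zero k hp) hp, ih]
    ring


/-- Exponent relation: if a nonzero polynomial map `G : ℂᵐ → ℂⁿ` with `G(0)=0`
satisfies `(‖w‖²)^α = (‖G(w)‖²)^β`, then `β ∣ α`. -/
theorem exponent_relation (m n : ℕ) (α β : ℕ) (hα : 0 < α) (hβ : 0 < β)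
    (P : Fin n → MvPolynomial (Fin m) ℂ)
    (hzero : ∀ j, MvPolynomial.eval (0 : Fin m → ℂ) (P j) = 0)
    (hnz : ∃ (w : Fin m → ℂ) (j : Fin n), MvPolynomial.eval w (P j) ≠ 0)
    (h : ∀ w : Fin m → ℂ,
      (∑ i, ‖w i‖ ^ 2) ^ α =
        (∑ j, ‖MvPolynomial.eval w (P j)‖ ^ 2) ^ β) :
    β ∣ α := by
  classical
  obtain ⟨w, j₀, hw⟩ := hnz
  -- the single-variable restrictions
  set Q : Fin n → Polynomial ℂ := fun j =>
    MvPolynomial.eval₂ Polynomial.C (fun i => Polynomial.C (w i) * Polynomial.X) (P j) with hQ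
  have hQeval : ∀ (j) (t : ℂ),
      Polynomial.eval t (Q j) = MvPolynomial.eval (fun i => w i * t) (P j) := by
    intro j t
    have h2 := MvPolynomial.eval₂_comp_left (Polynomial.evalRingHom t) Polynomial.C
      (fun i => Polynomial.C (w i) * Polynomial.X) (P j)
    simp only [hQ]
    simp only [Polynomial.coe_evalRingHom, Function.comp_def, Polynomial.eval_mul,
      Polynomial.eval_C, Polynomial.eval_X, RingHom.coe_comp] at h2
    rw [h2, ← MvPolynomial.eval₂_id]
    congr 1
    exact RingHom.ext fun x => by simp
  have hconj : ∀ (p : Polynomial ℂ) (t : ℝ),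
      Polynomial.eval (t : ℂ) (p.map (starRingEnd ℂ)) =
        (starRingEnd ℂ) (Polynomial.eval (t : ℂ) p) := by
    intro p t
    rw [Polynomial.eval_map]
    have h3 := Polynomial.hom_eval₂ p (RingHom.id ℂ) (starRingEnd ℂ) ((t : ℝ) : ℂ)
    simpa [Complex.conj_ofReal] using h3.symm
  set f : Polynomial ℂ := ∑ j, Q j * (Q j).map (starRingEnd ℂ) with hf
  have hfe : ∀ t : ℝ, Polynomial.eval (t : ℂ) f =
      ((∑ j, ‖MvPolynomial.eval (fun i => w i * t) (P j)‖ ^ 2 : ℝ) : ℂ) := by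
    intro t
    rw [hf, Polynomial.eval_finset_sum, Complex.ofReal_sum]
    refine Finset.sum_congr rfl fun j _ => ?_
    rw [Polynomial.eval_mul, hconj, hQeval, Complex.mul_conj, ← Complex.sq_norm]
  -- nonvanishing at t = 1
  have hw1 : (fun i => w i * ((1:ℝ):ℂ)) = w := funext fun i => by simp
  have hr1pos : 0 < ∑ j, ‖MvPolynomial.eval w (P j)‖ ^ 2 :=
    Finset.sum_pos' (fun j _ => by positivity)
      ⟨j₀, Finset.mem_univ _, by have := norm_pos_iff.mpr hw; positivity⟩
  have hf0 : f ≠ 0 := by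
    intro h0
    have h1 := hfe 1
    rw [h0, hw1] at h1
    simp only [Polynomial.eval_zero] at h1
    have : ∑ j, ‖MvPolynomial.eval w (P j)‖ ^ 2 = 0 := by exact_mod_cast h1.symm
    exact hr1pos.ne' this
  -- the squared norm of w
  set S : ℝ := ∑ i, ‖w i‖ ^ 2 with hSdef
  have hw0 : w ≠ 0 := by
    intro h0
    exact hw (by rw [h0]; exact hzero j₀)
  have hSpos : 0 < S := by
    obtain ⟨i, hi⟩ := Function.ne_iff.mp hw0
    refine Finset.sum_pos' (fun i _ => by positivity) ⟨i, Finset.mem_univ _, ?_⟩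
    have := norm_pos_iff.mpr hi
    positivity
  have hSc : ((S:ℂ)) ≠ 0 := by exact_mod_cast hSpos.ne'
  -- the polynomial identity  C S^α * X^(2α) = f^β
  set g : Polynomial ℂ := Polynomial.C ((S:ℂ)^α) * Polynomial.X ^ (2*α) with hg
  have hsum : ∀ t : ℝ, ∑ i, ‖w i * (t:ℂ)‖ ^ 2 = S * t^2 := by
    intro t
    rw [hSdef, Finset.sum_mul]
    refine Finset.sum_congr rfl fun i _ => ?_
    rw [norm_mul, mul_pow, Complex.norm_real, Real.norm_eq_abs, sq_abs]
  have hpoly : g = f ^ β := by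
    apply Polynomial.eq_of_infinite_eval_eq
    apply Set.infinite_of_injective_forall_mem (f := fun t : ℝ => (t : ℂ))
      (hi := Complex.ofReal_injective)
    intro t
    show Polynomial.eval _ g = Polynomial.eval _ (f ^ β)
    rw [Polynomial.eval_pow, hfe t, hg]
    have hh := h (fun i => w i * (t:ℂ))
    rw [hsum t] at hh
    have e1 : (((S * t^2)^α : ℝ) : ℂ) =
        ((∑ j, ‖MvPolynomial.eval (fun i => w i * (t:ℂ)) (P j)‖ ^ 2 : ℝ) : ℂ)^β := by
      rw [hh]
      push_cast
      ring
    rw [← e1]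
    simp only [Polynomial.eval_mul, Polynomial.eval_C, Polynomial.eval_pow, Polynomial.eval_X]
    push_cast
    ring
  -- degree bookkeeping
  have hXpow : (Polynomial.X ^ (2*α) : Polynomial ℂ) ≠ 0 := pow_ne_zero _ Polynomial.X_ne_zero
  have hCne : (Polynomial.C ((S:ℂ)^α) : Polynomial ℂ) ≠ 0 := by
    rw [Ne, Polynomial.C_eq_zero]
    exact pow_ne_zero _ hSc
  have hdeg : β * f.natDegree = 2*α := by
    have := congrArg Polynomial.natDegree hpoly
    rwa [Polynomial.natDegree_pow, hg, Polynomial.natDegree_C_mul (pow_ne_zero _ hSc),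
      Polynomial.natDegree_X_pow, eq_comm] at this
  have htr : β * f.natTrailingDegree = 2*α := by
    have := congrArg Polynomial.natTrailingDegree hpoly
    rwa [natTrailingDegree_pow' hf0, hg, Polynomial.natTrailingDegree_mul hCne hXpow,
      Polynomial.natTrailingDegree_C, Polynomial.natTrailingDegree_X_pow, zero_add, eq_comm] at this
  have hDT : f.natTrailingDegree = f.natDegree :=
    Nat.eq_of_mul_eq_mul_left hβ (htr.trans hdeg.symm)
  set d := f.natDegree with hd
  -- f is a monomial
  have hmono : f = Polynomial.monomial d (f.coeff d) := by
    ext i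
    rcases lt_trichotomy i d with hi | rfl | hi
    · rw [Polynomial.coeff_monomial, if_neg hi.ne',
        Polynomial.coeff_eq_zero_of_lt_natTrailingDegree (hDT ▸ hi)]
    · simp [Polynomial.coeff_monomial]
    · rw [Polynomial.coeff_monomial, if_neg hi.ne,
        Polynomial.coeff_eq_zero_of_natDegree_lt hi]
  have heval : ∀ t : ℝ, f.coeff d * (t:ℂ)^d =
      ((∑ j, ‖MvPolynomial.eval (fun i => w i * t) (P j)‖ ^ 2 : ℝ) : ℂ) := by
    intro t
    rw [← hfe t]
    conv_rhs => rw [hmono]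
    rw [Polynomial.eval_monomial]
  -- the coefficient is a positive real
  have h1 : f.coeff d = ((∑ j, ‖MvPolynomial.eval w (P j)‖ ^ 2 : ℝ) : ℂ) := by
    have h1' := heval 1
    rw [hw1] at h1'
    simpa using h1'
  -- parity of d
  have hdeven : Even d := by
    by_contra hodd
    rw [Nat.not_even_iff_odd] at hodd
    have h2 := heval (-1)
    rw [Complex.ofReal_neg, Complex.ofReal_one, hodd.neg_one_pow, mul_neg_one, h1,
      ← Complex.ofReal_neg] at h2
    have h2' := Complex.ofReal_inj.mp h2
    have hge : (0:ℝ) ≤ -(∑ j, ‖MvPolynomial.eval w (P j)‖ ^ 2) := by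
      rw [h2']
      exact Finset.sum_nonneg fun j _ => by positivity
    linarith
  obtain ⟨k, hk⟩ := hdeven
  refine ⟨k, ?_⟩
  have h5 : 2 * (β * k) = 2 * α := by rw [← hdeg, hk]; ring
  exact (Nat.eq_of_mul_eq_mul_left (by norm_num) h5).symm
end

section
/- Let G : ℂ^m → ℂ^n be a polynomial map satisfying ‖G(w)‖^2 = ‖w‖^{2M} for all w ∈ ℂ^m, where M ≥ 1. Then every component of G is a homogeneous polynomial of degree exactly M (all monomials appearing in G have total degree M). -/
open MvPolynomial Finset

private lemma eval_mul_homog {m d : ℕ} {p : MvPolynomial (Fin m) ℂ}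
    (hp : p.IsHomogeneous d) (t : ℂ) (w : Fin m → ℂ) :
    MvPolynomial.eval (fun i => t * w i) p = t ^ d * MvPolynomial.eval w p := by
  rw [MvPolynomial.eval_eq', MvPolynomial.eval_eq', Finset.mul_sum]
  refine Finset.sum_congr rfl fun c hc => ?_
  have h2 := hp (MvPolynomial.mem_support_iff.mp hc)
  have h1 : ∑ i, c i = d := by
    rw [← h2, Finsupp.weight_apply, Finsupp.sum]
    simp only [Pi.one_apply, smul_eq_mul, mul_one]
    exact (Finset.sum_subset (Finset.subset_univ _)
      (fun i _ hi => Finsupp.notMem_support_iff.mp hi)).symm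
  have h3 : ∏ i, (t * w i) ^ c i = t ^ d * ∏ i, w i ^ c i := by
    rw [← h1, ← Finset.prod_pow_eq_pow_sum, ← Finset.prod_mul_distrib]
    simp [mul_pow]
  rw [h3]; ring

/-- If a polynomial map `G : ℂᵐ → ℂⁿ` satisfies `‖G(w)‖² = ‖w‖^{2M}` with
`M ≥ 1`, then every component of `G` is homogeneous of degree `M`. -/
theorem components_homogeneous (m n M : ℕ) (hM : 1 ≤ M)
    (P : Fin n → MvPolynomial (Fin m) ℂ)
    (h : ∀ w : Fin m → ℂ,
      ∑ j, ‖MvPolynomial.eval w (P j)‖ ^ 2 =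
        (∑ i, ‖w i‖ ^ 2) ^ M) :
    ∀ j, (P j).IsHomogeneous M := by
  classical
  set N : ℕ := Finset.univ.sup (fun j => (P j).totalDegree) with hN
  have hNle : ∀ j : Fin n, (P j).totalDegree ≤ N :=
    fun j => Finset.le_sup (f := fun j' => (P j').totalDegree) (Finset.mem_univ j)
  have hcomp0 : ∀ (j : Fin n) (d : ℕ), N < d → homogeneousComponent d (P j) = 0 :=
    fun j d hd => homogeneousComponent_eq_zero _ _ (lt_of_le_of_lt (hNle j) hd)
  have hPsum : ∀ j : Fin n,
      ∑ d ∈ Finset.range (N + 1), homogeneousComponent d (P j) = P j := by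
    intro j
    conv_rhs => rw [← sum_homogeneousComponent (P j)]
    refine (Finset.sum_subset (Finset.range_subset_range.mpr (Nat.succ_le_succ (hNle j)))
      fun d _ hd => ?_).symm
    exact homogeneousComponent_eq_zero _ _ (by
      simp only [Finset.mem_range, not_lt] at hd; omega)
  -- Key step: all homogeneous components of degree ≠ M vanish pointwise.
  have key : ∀ (w : Fin m → ℂ) (d : ℕ), d ≠ M → ∀ j,
      MvPolynomial.eval w (homogeneousComponent d (P j)) = 0 := by
    intro w d hdM j
    by_contra hqjd
    set q : Fin n → ℕ → ℂ :=
      fun j' d' => MvPolynomial.eval w (homogeneousComponent d' (P j')) with hq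
    have hqjd' : q j d ≠ 0 := hqjd
    set S : ℝ := ∑ i, ‖w i‖ ^ 2 with hS
    set c : ℂ := (S : ℂ) ^ M with hc
    set A : Fin n → Polynomial ℂ :=
      fun j' => ∑ e ∈ Finset.range (N + 1), Polynomial.C (q j' e) * Polynomial.X ^ e with hA
    set B : Fin n → Polynomial ℂ :=
      fun j' => ∑ e ∈ Finset.range (N + 1),
        Polynomial.C ((starRingEnd ℂ) (q j' e)) * Polynomial.X ^ e with hB
    have hqz : ∀ j' e, N < e → q j' e = 0 := fun j' e he => by
      simp [hq, hcomp0 j' e he]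
    have hcoeffA : ∀ j' e, (A j').coeff e = q j' e := by
      intro j' e
      rw [hA]
      simp only [Polynomial.finset_sum_coeff, Polynomial.coeff_C_mul_X_pow,
        Finset.sum_ite_eq, Finset.mem_range]
      split_ifs with he
      · rfl
      · exact (hqz j' e (by omega)).symm
    have hcoeffB : ∀ j' e, (B j').coeff e = (starRingEnd ℂ) (q j' e) := by
      intro j' e
      rw [hB]
      simp only [Polynomial.finset_sum_coeff, Polynomial.coeff_C_mul_X_pow,
        Finset.sum_ite_eq, Finset.mem_range]
      split_ifs with he
      · rfl
      · rw [hqz j' e (by omega), map_zero]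
    -- the key polynomial identity
    have hE : ∑ j', A j' * B j' = Polynomial.C c * Polynomial.X ^ (2 * M) := by
      apply Polynomial.eq_of_infinite_eval_eq
      refine (Set.infinite_range_of_injective Complex.ofReal_injective).mono ?_
      rintro _ ⟨t, rfl⟩
      simp only [Set.mem_setOf_eq]
      have hAeval : ∀ j', (A j').eval (t : ℂ)
          = MvPolynomial.eval (fun i => (t : ℂ) * w i) (P j') := by
        intro j'
        rw [← hPsum j', map_sum, hA]
        rw [Polynomial.eval_finset_sum]
        refine Finset.sum_congr rfl fun e _ => ?_
        rw [eval_mul_homog (homogeneousComponent_isHomogeneous e (P j')) (t : ℂ) w,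
          Polynomial.eval_mul, Polynomial.eval_C, Polynomial.eval_pow, Polynomial.eval_X]
        rw [show q j' e = MvPolynomial.eval w (homogeneousComponent e (P j')) from rfl]
        ring
      have hBeval : ∀ j', (B j').eval (t : ℂ) = (starRingEnd ℂ) ((A j').eval (t : ℂ)) := by
        intro j'
        rw [hA, hB, Polynomial.eval_finset_sum, Polynomial.eval_finset_sum, map_sum]
        refine Finset.sum_congr rfl fun e _ => ?_
        simp only [Polynomial.eval_mul, Polynomial.eval_C, Polynomial.eval_pow,
          Polynomial.eval_X, map_mul, map_pow, Complex.conj_ofReal]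
      rw [Polynomial.eval_finset_sum]
      have hterm : ∀ j', ((A j') * (B j')).eval (t : ℂ) =
          ((‖MvPolynomial.eval (fun i => (t : ℂ) * w i) (P j')‖ ^ 2 : ℝ) : ℂ) := by
        intro j'
        rw [Polynomial.eval_mul, hBeval, hAeval, Complex.mul_conj]
        norm_cast
        exact (Complex.sq_norm _).symm
      rw [Finset.sum_congr rfl fun j' _ => hterm j']
      rw [← Complex.ofReal_sum, h (fun i => (t : ℂ) * w i)]
      have habs : ∀ i, ‖(t : ℂ) * w i‖ ^ 2 = t ^ 2 * ‖w i‖ ^ 2 := by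
        intro i
        rw [norm_mul, mul_pow, Complex.norm_real, Real.norm_eq_abs, sq_abs]
      rw [Finset.sum_congr rfl fun i _ => habs i, ← Finset.mul_sum, ← hS, mul_pow, ← pow_mul]
      rw [Polynomial.eval_mul, Polynomial.eval_C, Polynomial.eval_pow, Polynomial.eval_X, hc]
      push_cast
      ring
    -- coefficient comparison
    have hcoeff : ∀ k, ∑ j', ∑ p ∈ Finset.HasAntidiagonal.antidiagonal k,
        q j' p.1 * (starRingEnd ℂ) (q j' p.2) = if k = 2 * M then c else 0 := by
      intro k
      have h0 := congrArg (fun pp : Polynomial ℂ => pp.coeff k) hE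
      rw [Polynomial.finset_sum_coeff, Polynomial.coeff_C_mul, Polynomial.coeff_X_pow] at h0
      simp only [Polynomial.coeff_mul, hcoeffA, hcoeffB, mul_ite, mul_one, mul_zero] at h0
      exact h0
    set T : Finset ℕ := (Finset.range (N + 1)).filter (fun e => ∃ j', q j' e ≠ 0) with hT
    have hmemT : ∀ e, (∃ j', q j' e ≠ 0) → e ∈ T := by
      intro e ⟨j', hj'⟩
      refine Finset.mem_filter.mpr ⟨Finset.mem_range.mpr ?_, j', hj'⟩
      by_contra h'
      exact hj' (hqz j' e (by omega))
    have hTne : T.Nonempty := ⟨d, hmemT d ⟨j, hqjd'⟩⟩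
    -- generic diagonal argument
    have hdiag : ∀ E : ℕ, (∃ j', q j' E ≠ 0) →
        (∀ (p : ℕ × ℕ), p.1 + p.2 = 2 * E → p ≠ (E, E) → (∀ j', q j' p.1 = 0) ∨ (∀ j', q j' p.2 = 0)) →
        E = M := by
      intro E hEex hoff
      have hsum : ∀ j', ∑ p ∈ Finset.HasAntidiagonal.antidiagonal (2 * E),
          q j' p.1 * (starRingEnd ℂ) (q j' p.2) = q j' E * (starRingEnd ℂ) (q j' E) := by
        intro j'
        rw [Finset.sum_eq_single (E, E)]
        · intro p hp hne
          rcases hoff p (Finset.HasAntidiagonal.mem_antidiagonal.mp hp) hne with h1 | h1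
          · rw [h1 j', zero_mul]
          · rw [h1 j', map_zero, mul_zero]
        · intro habs
          exact absurd (Finset.HasAntidiagonal.mem_antidiagonal.mpr (by ring)) habs
      have h2E := hcoeff (2 * E)
      rw [Finset.sum_congr rfl fun j' _ => hsum j'] at h2E
      have hne0 : (∑ j', q j' E * (starRingEnd ℂ) (q j' E)) ≠ 0 := by
        obtain ⟨j0, hj0⟩ := hEex
        have heq : (∑ j', q j' E * (starRingEnd ℂ) (q j' E))
            = ((∑ j', Complex.normSq (q j' E) : ℝ) : ℂ) := by
          push_cast
          exact Finset.sum_congr rfl fun j' _ => Complex.mul_conj _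
        rw [heq]
        rw [Ne, Complex.ofReal_eq_zero]
        refine ne_of_gt (Finset.sum_pos' (fun i _ => Complex.normSq_nonneg _)
          ⟨j0, Finset.mem_univ _, Complex.normSq_pos.mpr hj0⟩)
      rw [h2E] at hne0
      by_contra hEM
      exact hne0 (if_neg (by omega))
    set D : ℕ := T.max' hTne with hD
    set D0 : ℕ := T.min' hTne with hD0
    have hhigh : ∀ e, D < e → ∀ j', q j' e = 0 := by
      intro e he j'
      by_contra hne
      exact absurd (T.le_max' e (hmemT e ⟨j', hne⟩)) (not_le.mpr he)
    have hlow : ∀ e, e < D0 → ∀ j', q j' e = 0 := by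
      intro e he j'
      by_contra hne
      exact absurd (T.min'_le e (hmemT e ⟨j', hne⟩)) (not_le.mpr he)
    have hDmem := T.max'_mem hTne
    have hD0mem := T.min'_mem hTne
    have hDM : D = M := by
      refine hdiag D (Finset.mem_filter.mp hDmem).2 ?_
      rintro ⟨a, b⟩ hab hne
      have hab' : a + b = 2 * D := hab
      rcases lt_or_ge D a with h1 | h1
      · exact Or.inl (hhigh a h1)
      · rcases lt_or_ge D b with h2 | h2
        · exact Or.inr (hhigh b h2)
        · have ha : a = D := by omega
          have hb : b = D := by omega
          exact absurd (by rw [ha, hb]) hne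
    have hD0M : D0 = M := by
      refine hdiag D0 (Finset.mem_filter.mp hD0mem).2 ?_
      rintro ⟨a, b⟩ hab hne
      have hab' : a + b = 2 * D0 := hab
      rcases lt_or_ge a D0 with h1 | h1
      · exact Or.inl (hlow a h1)
      · rcases lt_or_ge b D0 with h2 | h2
        · exact Or.inr (hlow b h2)
        · have ha : a = D0 := by omega
          have hb : b = D0 := by omega
          exact absurd (by rw [ha, hb]) hne
    have hdT : d ∈ T := hmemT d ⟨j, hqjd'⟩
    have := T.min'_le d hdT
    have := T.le_max' d hdT
    omega
  -- conclude homogeneity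
  intro j d hd
  by_contra hne
  have hdeg : d.degree ≠ M := by rwa [Finsupp.degree_eq_weight_one]
  have hz : homogeneousComponent d.degree (P j) = 0 := by
    apply MvPolynomial.funext (q := 0)
    intro x
    rw [key x d.degree hdeg j, map_zero]
  have hcoeffd := coeff_homogeneousComponent (n := d.degree) (φ := P j) d
  rw [hz, if_pos rfl] at hcoeffd
  exact hd (by simpa using hcoeffd.symm)
end

section
/- Let f : ℂ → ℂ be a polynomial, not identically zero, with f(0) = 0, and suppose there are positive integers α, β with |w|^{2α} = |f(w)|^{2β} for all w ∈ ℂ. Then β divides α and there exists a constant c ∈ ℂ with |c| = 1 such that f(w) = c·w^{α/β}. -/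
/-- One-variable classification: if a nonzero polynomial `f` with `f(0)=0`
satisfies `|w|^{2α} = |f(w)|^{2β}` for all `w`, then `β ∣ α` and
`f(w) = c·w^{α/β}` for a unimodular constant `c`. -/
theorem one_dim_classification (f : Polynomial ℂ) (hf : f ≠ 0)
    (hf0 : f.eval 0 = 0) (α β : ℕ) (hα : 0 < α) (hβ : 0 < β)
    (h : ∀ w : ℂ, ‖w‖ ^ (2 * α) = ‖f.eval w‖ ^ (2 * β)) :
    β ∣ α ∧ ∃ c : ℂ, ‖c‖ = 1 ∧ ∀ w : ℂ, f.eval w = c * w ^ (α / β) := by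
  set n := f.natDegree with hn
  have hsplit : f.roots.card = n :=
    Polynomial.splits_iff_card_roots.mp (IsAlgClosed.splits f)
  have hroots : f.roots = Multiset.replicate n 0 := by
    rw [Multiset.eq_replicate]
    refine ⟨hsplit, fun r hr => ?_⟩
    have hr0 : f.eval r = 0 := Polynomial.isRoot_of_mem_roots hr
    have h2 := h r
    rw [hr0, norm_zero] at h2
    have : ‖r‖ ^ (2 * α) = 0 := by
      rw [h2]; exact zero_pow (by positivity)
    have : ‖r‖ = 0 := by
      exact pow_eq_zero_iff (by positivity) |>.mp this
    simpa using this
  have hf_eq : f = Polynomial.C f.leadingCoeff * Polynomial.X ^ n := by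
    conv_lhs => rw [← Polynomial.C_leadingCoeff_mul_prod_multiset_X_sub_C hsplit]
    rw [hroots]
    simp [Multiset.map_replicate, Multiset.prod_replicate]
  set c := f.leadingCoeff with hcdef
  have hc : c ≠ 0 := Polynomial.leadingCoeff_ne_zero.mpr hf
  have heval : ∀ w : ℂ, f.eval w = c * w ^ n := by
    intro w; rw [hf_eq]; simp
  have key : ∀ t : ℝ, 0 ≤ t →
      t ^ (2 * α) = ‖c‖ ^ (2 * β) * t ^ (2 * β * n) := by
    intro t ht
    have := h t
    rw [heval, norm_mul, norm_pow, mul_pow, ← pow_mul,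
      Complex.norm_of_nonneg ht] at this
    rw [this]; ring_nf
  set A := ‖c‖ ^ (2 * β) with hA
  have hApos : 0 < A := pow_pos (norm_pos_iff.mpr hc) _
  clear_value A
  have h2 := key 2 (by norm_num)
  have h4 := key 4 (by norm_num)
  have h4' : (2:ℝ) ^ (4 * α) = A * 2 ^ (4 * (β * n)) := by
    have h42 : (4:ℝ) = 2 ^ 2 := by norm_num
    rw [h42, ← pow_mul, ← pow_mul, show 2 * (2 * α) = 4 * α from by ring,
      show 2 * (2 * β * n) = 4 * (β * n) from by ring] at h4
    exact h4
  have hsq : (2:ℝ) ^ (4 * α) = A ^ 2 * 2 ^ (4 * (β * n)) := by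
    have h' : ((2:ℝ) ^ (2 * α)) ^ 2 = (A * 2 ^ (2 * β * n)) ^ 2 := by rw [h2]
    rw [← pow_mul, mul_pow, ← pow_mul, show 2 * α * 2 = 4 * α from by ring,
      show 2 * β * n * 2 = 4 * (β * n) from by ring] at h'
    exact h'
  have hp : (0:ℝ) < 2 ^ (4 * (β * n)) := by positivity
  have hAA : A = A ^ 2 := mul_right_cancel₀ (ne_of_gt hp) (h4' ▸ hsq : _)
  have hA1 : A = 1 := by
    have hx : A * A = A * 1 := by rw [mul_one, ← sq, ← hAA]
    exact (mul_left_cancel₀ (ne_of_gt hApos) hx)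
  have habs : ‖c‖ = 1 := by
    have hx : 0 ≤ ‖c‖ := norm_nonneg _
    have hnz : 2 * β ≠ 0 := by positivity
    rcases lt_trichotomy ‖c‖ 1 with hlt | heq | hgt
    · have := pow_lt_one₀ hx hlt hnz
      rw [← hA, hA1] at this; exact absurd this (lt_irrefl 1)
    · exact heq
    · have := one_lt_pow₀ hgt hnz
      rw [← hA, hA1] at this; exact absurd this (lt_irrefl 1)
  have hexp : 2 * α = 2 * β * n := by
    have h2' : (2:ℝ) ^ (2 * α) = 2 ^ (2 * β * n) := by rw [h2, hA1, one_mul]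
    have h2'' : ((2:ℕ):ℝ) ^ (2 * α) = ((2:ℕ):ℝ) ^ (2 * β * n) := by push_cast; exact h2'
    have : (2:ℕ) ^ (2 * α) = 2 ^ (2 * β * n) := by
      exact_mod_cast h2''
    exact Nat.pow_right_injective (by norm_num) this
  have hαβ : α = β * n := by
    rw [mul_assoc] at hexp
    exact Nat.eq_of_mul_eq_mul_left (by norm_num) hexp
  refine ⟨⟨n, hαβ⟩, c, habs, fun w => ?_⟩
  rw [heval, hαβ, Nat.mul_div_cancel_left n hβ]
end

section
/- Let G : ℂ^m → ℂ^n be a polynomial map with G(0) = 0, G not identically zero, and suppose ‖w‖^2 = ‖G(w)‖^{2β} for all w ∈ ℂ^m for some positive integer β. Then β = 1. -/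
open Polynomial in
private lemma line_eval {m : ℕ} (t : ℂ) (w : Fin m → ℂ) (p : MvPolynomial (Fin m) ℂ) :
    Polynomial.eval t (MvPolynomial.eval₂ Polynomial.C (fun i => Polynomial.C (w i) * Polynomial.X) p)
      = MvPolynomial.eval (fun i => w i * t) p := by
  have := MvPolynomial.eval₂_comp_left (Polynomial.evalRingHom t)
    (Polynomial.C : ℂ →+* Polynomial ℂ) (fun i => Polynomial.C (w i) * Polynomial.X) p
  simp only [Polynomial.coe_evalRingHom] at this
  rw [this, MvPolynomial.eval]
  congr 1
  · ext x; simp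
  · ext i; simp [Function.comp]

private lemma eval_abs_le (R : Polynomial ℂ) (t : ℝ) (h0 : 0 ≤ t) (h1 : t ≤ 1) :
    ‖R.eval (t:ℂ)‖ ≤ ∑ k ∈ Finset.range (R.natDegree+1), ‖R.coeff k‖ := by
  rw [Polynomial.eval_eq_sum_range]
  refine (norm_sum_le _ _).trans (Finset.sum_le_sum ?_)
  intro k _
  rw [norm_mul, norm_pow]
  have ht : ‖(t:ℂ)‖ ≤ 1 := by rw [Complex.norm_real, Real.norm_of_nonneg h0]; exact h1
  calc ‖R.coeff k‖ * ‖(t:ℂ)‖ ^ k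
      ≤ ‖R.coeff k‖ * 1 := by
        gcongr
        exact pow_le_one₀ (norm_nonneg _) ht
    _ = _ := mul_one _

/-- If a nonzero polynomial map `G : ℂᵐ → ℂⁿ` with `G(0)=0` satisfies
`‖w‖² = (‖G(w)‖²)^β` for all `w`, then `β = 1`. -/
theorem last_block_exponent_one (m n : ℕ) (β : ℕ) (hβ : 0 < β)
    (P : Fin n → MvPolynomial (Fin m) ℂ)
    (hzero : ∀ j, MvPolynomial.eval (0 : Fin m → ℂ) (P j) = 0)
    (hnz : ∃ (w : Fin m → ℂ) (j : Fin n), MvPolynomial.eval w (P j) ≠ 0)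
    (h : ∀ w : Fin m → ℂ,
      ∑ i, ‖w i‖ ^ 2 =
        (∑ j, ‖MvPolynomial.eval w (P j)‖ ^ 2) ^ β) :
    β = 1 := by
  by_contra hne
  have hβ2 : 2 ≤ β := by omega
  obtain ⟨w, j0, hj0⟩ := hnz
  have hw : w ≠ 0 := by rintro rfl; exact hj0 (hzero j0)
  set A := ∑ i, ‖w i‖ ^ 2 with hA
  have hApos : 0 < A := by
    obtain ⟨i, hi⟩ := Function.ne_iff.mp hw
    have h1 : 0 < ‖w i‖ ^ 2 := pow_pos (norm_pos_iff.mpr hi) 2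
    exact lt_of_lt_of_le h1
      (Finset.single_le_sum (fun k _ => sq_nonneg ‖w k‖) (Finset.mem_univ i))
  -- restrict to the line t ↦ t • w
  set Q : Fin n → Polynomial ℂ := fun j =>
    MvPolynomial.eval₂ Polynomial.C (fun i => Polynomial.C (w i) * Polynomial.X) (P j) with hQdef
  have hQeval : ∀ j (t : ℂ), (Q j).eval t = MvPolynomial.eval (fun i => w i * t) (P j) :=
    fun j t => line_eval t w (P j)
  have hQ0 : ∀ j, (Q j).coeff 0 = 0 := by
    intro j
    rw [Polynomial.coeff_zero_eq_eval_zero, hQeval j 0]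
    have : (fun i => w i * (0:ℂ)) = (0 : Fin m → ℂ) := by funext i; simp
    rw [this]; exact hzero j
  have hdvd : ∀ j, ∃ R : Polynomial ℂ, Q j = Polynomial.X * R := by
    intro j
    exact Polynomial.X_dvd_iff.mpr (hQ0 j)
  choose R hR using hdvd
  set C := ∑ j, (∑ k ∈ Finset.range ((R j).natDegree+1), ‖(R j).coeff k‖) ^ 2 with hC
  have hCnn : 0 ≤ C := Finset.sum_nonneg fun j _ => sq_nonneg _
  -- key estimate
  have key : ∀ t : ℝ, 0 < t → t ≤ 1 → A ≤ C ^ β * t ^ 2 := by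
    intro t ht0 ht1
    have hid := h (fun i => w i * (t : ℂ))
    -- LHS of hid
    have hlhs : ∑ i, ‖w i * (t:ℂ)‖ ^ 2 = t ^ 2 * A := by
      rw [hA, Finset.mul_sum]
      refine Finset.sum_congr rfl fun i _ => ?_
      rw [norm_mul, Complex.norm_real, Real.norm_of_nonneg ht0.le]
      ring
    -- inner sum bound
    have hS : (∑ j, ‖MvPolynomial.eval (fun i => w i * (t:ℂ)) (P j)‖ ^ 2)
        ≤ t ^ 2 * C := by
      rw [hC, Finset.mul_sum]
      refine Finset.sum_le_sum fun j _ => ?_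
      rw [← hQeval, hR j, Polynomial.eval_mul, Polynomial.eval_X, norm_mul,
        Complex.norm_real, Real.norm_of_nonneg ht0.le, mul_pow]
      gcongr
      exact eval_abs_le (R j) t ht0.le ht1
    have hSnn : 0 ≤ ∑ j, ‖MvPolynomial.eval (fun i => w i * (t:ℂ)) (P j)‖ ^ 2 :=
      Finset.sum_nonneg fun j _ => sq_nonneg _
    have hmain : t ^ 2 * A ≤ (t ^ 2 * C) ^ β := by
      rw [← hlhs, hid]
      exact pow_le_pow_left₀ hSnn hS β
    have hexp : (t ^ 2 * C) ^ β = t ^ 2 * (t ^ (2 * β - 2) * C ^ β) := by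
      rw [mul_pow, ← pow_mul, ← mul_assoc]
      congr 1
      rw [← pow_add]
      congr 1
      omega
    have hA_le : A ≤ t ^ (2 * β - 2) * C ^ β := by
      have ht2 : (0:ℝ) < t ^ 2 := pow_pos ht0 2
      rw [hexp] at hmain
      exact le_of_mul_le_mul_left hmain ht2
    have hpow : t ^ (2 * β - 2) ≤ t ^ 2 :=
      pow_le_pow_of_le_one ht0.le ht1 (by omega)
    calc A ≤ t ^ (2 * β - 2) * C ^ β := hA_le
      _ ≤ t ^ 2 * C ^ β := by gcongr
      _ = C ^ β * t ^ 2 := mul_comm _ _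
  -- take t → 0⁺
  have htend : Filter.Tendsto (fun t : ℝ => C ^ β * t ^ 2) (nhdsWithin 0 (Set.Ioi 0)) (nhds 0) := by
    have : Filter.Tendsto (fun t : ℝ => C ^ β * t ^ 2) (nhds 0) (nhds (C ^ β * 0 ^ 2)) := by
      exact (continuous_const.mul (continuous_pow 2)).tendsto 0
    simpa using this.mono_left nhdsWithin_le_nhds
  have hev : ∀ᶠ t in nhdsWithin (0:ℝ) (Set.Ioi 0), A ≤ C ^ β * t ^ 2 := by
    filter_upwards [Ioc_mem_nhdsGT_of_mem (by simp : (0:ℝ) ∈ Set.Ico (0:ℝ) 1)] with t ht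
    exact key t ht.1 ht.2
  have : A ≤ 0 := ge_of_tendsto htend hev
  linarith
end
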